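/- Let (A, p) be an envy-free solution and σ a permutation of [n] such that the reassigned allocation B := A_σ (where agent i receives bundle A_{σ(i)}) is envy-freeable. Then (B, p_σ), where agent i receives subsidy p_{σ(i)}, is also an envy-free solution. -/
import Mathlib


/-- If `(A, p)` is an envy-free solution and `σ` is a permutation such
that the reassigned allocation `B := A_σ` (agent `i` gets bundle `A (σ i)`) is
envy-freeable (here characterized as maximizing social welfare over all
reassignments of its bundles), then `(B, p_σ)` is also an envy-free solution. -/
theorem reshuffle_preserves_envy_freeness {n m : ℕ}
    (v : Fin n → Finset (Fin m) → ℝ)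
    (A : Fin n → Finset (Fin m))
    (hdisj : ∀ i j, i ≠ j → Disjoint (A i) (A j))
    (p : Fin n → ℝ) (hp : ∀ i, 0 ≤ p i)
    (hEF : ∀ i j, v i (A j) + p j ≤ v i (A i) + p i)
    (σ : Equiv.Perm (Fin n))
    (hBfreeable : ∀ τ : Equiv.Perm (Fin n),
        ∑ i, v i (A (σ (τ i))) ≤ ∑ i, v i (A (σ i))) :
    ∀ i j, v i (A (σ j)) + p (σ j) ≤ v i (A (σ i)) + p (σ i) := by
  -- termwise inequality
  have hterm : ∀ i ∈ Finset.univ, v i (A (σ i)) + p (σ i) ≤ v i (A i) + p i :=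
    fun i _ => hEF i (σ i)
  -- subsidies sum is permutation invariant
  have hps : ∑ i, p (σ i) = ∑ i, p i := Equiv.sum_comp σ p
  -- welfare inequality from maximality with τ = σ⁻¹
  have h2 : ∑ i, v i (A i) ≤ ∑ i, v i (A (σ i)) := by
    have := hBfreeable σ⁻¹
    simpa using this
  -- sums are equal
  have hsum : ∑ i, (v i (A (σ i)) + p (σ i)) = ∑ i, (v i (A i) + p i) := by
    apply le_antisymm (Finset.sum_le_sum hterm)
    simp only [Finset.sum_add_distrib, hps]
    linarith
  have heq : ∀ i, v i (A (σ i)) + p (σ i) = v i (A i) + p i := by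
    intro i
    exact (Finset.sum_eq_sum_iff_of_le hterm).mp hsum i (Finset.mem_univ i)
  intro i j
  calc v i (A (σ j)) + p (σ j) ≤ v i (A i) + p i := hEF i (σ j)
    _ = v i (A (σ i)) + p (σ i) := (heq i).symm
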